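/- Let τ and y₀ satisfy the leading-order escape-boundary equations y₀ = 1 + 2ετ x₀ - 3ε x₀ log(1+τ) and 2 = 6τε x₀ - (1+4τ)ε x₀ log((1+4τ)/(1+τ)), where ε x₀ → ∞ and τ → 0 with ε x₀ τ bounded. Then to leading order τ = 2/(3ε x₀) and y₀ = 1/3; i.e. substituting τ = 2/(3εx₀)(1 + o(1)) into the first equation and expanding log(1+τ) = τ - τ²/2 + O(τ³) gives y₀ → 1/3 as εx₀ → ∞. -/

import Mathlib

open Filter

private lemma log_slope_lim (c : ℝ) :
    Tendsto (fun t => Real.log (1 + c * t) / t) (nhdsWithin 0 {(0:ℝ)}ᶜ) (nhds c) := by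
  have h1 : HasDerivAt (fun t : ℝ => 1 + c * t) c 0 := by
    simpa using ((hasDerivAt_id (0:ℝ)).const_mul c).const_add 1
  have h : HasDerivAt (fun t : ℝ => Real.log (1 + c * t)) c 0 := by
    simpa using h1.log (by norm_num)
  have := hasDerivAt_iff_tendsto_slope.mp h
  refine this.congr fun t => ?_
  simp [slope_def_field, Real.log_one]

/-- Asymptotic solution of the escape-boundary matching equations: if, in terms of the
large parameter `s = εx₀`, the quantities `τ(s) > 0` and `y₀(s)` satisfy
`y₀ = 1 + 2sτ - 3s log(1+τ)` and `2 = 6τs - (1+4τ)s log((1+4τ)/(1+τ))`, with `τ → 0`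
and `sτ` bounded, then to leading order `τ = 2/(3s)` and `y₀ → 1/3`. -/
theorem stmt16 (τ y₀ : ℝ → ℝ)
    (hτpos : ∀ s, 0 < s → 0 < τ s)
    (hτ0 : Tendsto τ atTop (nhds 0))
    (hbd : ∃ C : ℝ, ∀ s, 0 < s → s * τ s ≤ C)
    (heq1 : ∀ s, 0 < s → y₀ s = 1 + 2 * s * τ s - 3 * s * Real.log (1 + τ s))
    (heq2 : ∀ s, 0 < s →
      2 = 6 * τ s * s
        - (1 + 4 * τ s) * s * Real.log ((1 + 4 * τ s) / (1 + τ s))) :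
    Tendsto (fun s => s * τ s) atTop (nhds (2 / 3)) ∧
    Tendsto y₀ atTop (nhds (1 / 3)) := by
  have hev : ∀ᶠ s : ℝ in atTop, 0 < s := eventually_gt_atTop 0
  have hτne : Tendsto τ atTop (nhdsWithin 0 {(0:ℝ)}ᶜ) := by
    rw [tendsto_nhdsWithin_iff]
    exact ⟨hτ0, hev.mono fun s hs => (hτpos s hs).ne'⟩
  have hA : Tendsto (fun s => Real.log (1 + τ s) / τ s) atTop (nhds 1) := by
    have := (log_slope_lim 1).comp hτne
    simpa [Function.comp_def] using this
  have hB : Tendsto (fun s => Real.log (1 + 4 * τ s) / τ s) atTop (nhds 4) := by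
    have := (log_slope_lim 4).comp hτne
    simpa [Function.comp_def] using this
  set D : ℝ → ℝ := fun s =>
    6 - (1 + 4 * τ s) * ((Real.log (1 + 4 * τ s) - Real.log (1 + τ s)) / τ s) with hDdef
  have hD : Tendsto D atTop (nhds 3) := by
    have h1 : Tendsto (fun s => 1 + 4 * τ s) atTop (nhds 1) := by
      have := (hτ0.const_mul 4).const_add 1
      simpa using this
    have h2 : Tendsto (fun s => (Real.log (1 + 4 * τ s) - Real.log (1 + τ s)) / τ s)
        atTop (nhds 3) := by
      have h := hB.sub hA
      rw [show (4:ℝ) - 1 = 3 by norm_num] at h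
      exact h.congr fun s => (sub_div _ _ _).symm
    have h3 : Tendsto D atTop (nhds (6 - 1 * 3)) :=
      Tendsto.sub tendsto_const_nhds (h1.mul h2)
    norm_num at h3
    exact h3
  have hkey : ∀ᶠ s : ℝ in atTop, s * τ s * D s = 2 := by
    filter_upwards [hev] with s hs
    have hτp := hτpos s hs
    have h1 : (0:ℝ) < 1 + τ s := by linarith
    have h4 : (0:ℝ) < 1 + 4 * τ s := by linarith
    have h2 := heq2 s hs
    rw [Real.log_div h4.ne' h1.ne'] at h2
    rw [hDdef]
    field_simp
    ring_nf
    ring_nf at h2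
    linarith
  have hDne : ∀ᶠ s : ℝ in atTop, D s ≠ 0 :=
    hD.eventually_ne (by norm_num)
  have hst : Tendsto (fun s => s * τ s) atTop (nhds (2 / 3)) := by
    have heq : ∀ᶠ s : ℝ in atTop, s * τ s = 2 / D s := by
      filter_upwards [hkey, hDne] with s h1 h2
      field_simp
      linarith [h1]
    have hlim : Tendsto (fun s => 2 / D s) atTop (nhds (2 / 3)) :=
      Tendsto.div tendsto_const_nhds hD (by norm_num)
    exact hlim.congr' (heq.mono fun _ h => h.symm)
  refine ⟨hst, ?_⟩
  have hy : ∀ᶠ s : ℝ in atTop,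
      y₀ s = 1 + 2 * (s * τ s) - 3 * (s * τ s) * (Real.log (1 + τ s) / τ s) := by
    filter_upwards [hev] with s hs
    have hτp := (hτpos s hs).ne'
    rw [heq1 s hs]
    field_simp
  have hlim : Tendsto
      (fun s => 1 + 2 * (s * τ s) - 3 * (s * τ s) * (Real.log (1 + τ s) / τ s))
      atTop (nhds (1 / 3)) := by
    have h4 : Tendsto
        (fun s => 1 + 2 * (s * τ s) - 3 * (s * τ s) * (Real.log (1 + τ s) / τ s))
        atTop (nhds (1 + 2 * (2 / 3) - 3 * (2 / 3) * 1)) :=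
      Tendsto.sub (Tendsto.add tendsto_const_nhds (hst.const_mul 2))
        (Tendsto.mul (hst.const_mul 3) hA)
    norm_num at h4
    convert h4 using 2
  exact hlim.congr' (hy.mono fun _ h => h.symm)
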